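/- For any data set (so the bound is data-free), the density π_n of the empirical prior Π_n on the sieve Θ_n = Δ(S) × [t, T]^S satisfies, for all θ = (ω, μ) ∈ Θ_n, π_n(θ) ≤ (c + S)^{c + S + 1/2} c^{-c} · Π_{s=1}^S δ T^δ μ_s^{-(δ+1)} 1(μ_s ≥ t); consequently, ∫_{Θ_n} sup_{data} π_n(θ) dθ ≤ (c + S)^{c + S + 1/2} c^{-c} (T/t)^{δ S}. -/

import Mathlib

open MeasureTheory Set
open scoped ENNReal

/-- The simplex `Δ(S)` of probability vectors in `ℝ^S`. -/
def simplexSet (S : ℕ) : Set (Fin S → ℝ) :=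
  {ω | (∀ s, 0 ≤ ω s) ∧ ∑ s, ω s = 1}

/-- Lebesgue measure on the simplex `Δ(S)` (via the first `S-1` coordinates). -/
noncomputable def simplexMeasure : (S : ℕ) → Measure (Fin S → ℝ)
  | 0 => 0
  | m + 1 =>
      Measure.map (fun y : Fin m → ℝ => Fin.snoc y (1 - ∑ i, y i))
        (volume.restrict {y : Fin m → ℝ | (∀ i, 0 ≤ y i) ∧ ∑ i, y i ≤ 1})

/-- The density of the Pareto distribution `Par(m, δ)`: `δ m^δ μ^{-(δ+1)}` on `[m, ∞)`. -/
noncomputable def paretoDens (m δ x : ℝ) : ℝ :=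
  if m ≤ x then δ * m ^ δ * x ^ (-(δ + 1)) else 0

/-- The sieve `Θ_n = Δ(S) × [t, T]^S`. -/
def sieve (S : ℕ) (t T : ℝ) : Set ((Fin S → ℝ) × (Fin S → ℝ)) :=
  {θ | θ.1 ∈ simplexSet S ∧ ∀ s, θ.2 s ∈ Set.Icc t T}

/-- Joint density of the empirical prior `Π_n` centered at `θ̂ = (ω̂, μ̂)`:
Dirichlet density `Γ(c+S)/Π Γ(1+c ω̂_s) · Π ω_s^{c ω̂_s}` times the product of
Pareto densities `δ μ̂_s^δ μ_s^{-(δ+1)} 1(μ_s ≥ μ̂_s)`. -/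
noncomputable def empPriorDens (S : ℕ) (c δ : ℝ) (θhat θ : (Fin S → ℝ) × (Fin S → ℝ)) : ℝ :=
  (Real.Gamma (c + S) / ∏ s, Real.Gamma (1 + c * θhat.1 s)) *
    (∏ s, θ.1 s ^ (c * θhat.1 s)) * ∏ s, paretoDens (θhat.2 s) δ (θ.2 s)

/- ### Auxiliary lemmas on the Gamma function -/

lemma gamma_le_one_aux {x : ℝ} (h1 : 1 ≤ x) (h2 : x ≤ 2) : Real.Gamma x ≤ 1 := by
  have h := Real.convexOn_log_Gamma.2 (mem_Ioi.mpr one_pos) (mem_Ioi.mpr two_pos)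
    (by linarith : (0:ℝ) ≤ 2 - x) (by linarith : (0:ℝ) ≤ x - 1) (by ring)
  have hx : (2 - x) • (1:ℝ) + (x - 1) • (2:ℝ) = x := by simp [smul_eq_mul]; ring
  rw [hx] at h
  simp only [smul_eq_mul, Function.comp_apply, Real.Gamma_one, Real.Gamma_two, Real.log_one,
    mul_zero, add_zero, mul_one, zero_add] at h
  have hpos : 0 < Real.Gamma x := Real.Gamma_pos_of_pos (by linarith)
  calc Real.Gamma x = Real.exp (Real.log (Real.Gamma x)) := (Real.exp_log hpos).symm
    _ ≤ Real.exp 0 := Real.exp_le_exp.mpr h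
    _ = 1 := Real.exp_zero

lemma one_le_gamma_aux {x : ℝ} (h1 : 2 ≤ x) (h2 : x ≤ 3) : 1 ≤ Real.Gamma x := by
  have hy1 : (1:ℝ) ≤ 4 - x := by linarith
  have hy2 : (4:ℝ) - x ≤ 2 := by linarith
  have h := Real.convexOn_log_Gamma.2 (mem_Ioi.mpr (by linarith : (0:ℝ) < 4 - x))
    (mem_Ioi.mpr (by linarith : (0:ℝ) < x))
    (by norm_num : (0:ℝ) ≤ 1/2) (by norm_num : (0:ℝ) ≤ 1/2) (by norm_num)
  have hx : (1/2 : ℝ) • (4 - x) + (1/2 : ℝ) • x = 2 := by simp [smul_eq_mul]; ring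
  rw [hx] at h
  simp only [smul_eq_mul, Function.comp_apply, Real.Gamma_two, Real.log_one, mul_zero] at h
  have h4 : Real.log (Real.Gamma (4 - x)) ≤ 0 :=
    Real.log_nonpos (le_of_lt (Real.Gamma_pos_of_pos (by linarith))) (gamma_le_one_aux hy1 hy2)
  have hlog : 0 ≤ Real.log (Real.Gamma x) := by nlinarith [h, h4]
  calc (1:ℝ) = Real.exp 0 := Real.exp_zero.symm
    _ ≤ Real.exp (Real.log (Real.Gamma x)) := Real.exp_le_exp.mpr hlog
    _ = Real.Gamma x := Real.exp_log (Real.Gamma_pos_of_pos (by linarith))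

lemma gamma_lb_aux : ∀ (n : ℕ) (a : ℝ), 0 ≤ a → a ≤ n + 1 →
    a ^ a * Real.exp (-a) ≤ Real.Gamma (1 + a) := by
  intro n
  induction n with
  | zero =>
    intro a ha0 ha1
    push_cast at ha1
    rcases eq_or_lt_of_le ha0 with h | h
    · simp [← h, Real.Gamma_one]
    · have hG2 : 1 ≤ Real.Gamma (2 + a) := one_le_gamma_aux (by linarith) (by linarith)
      have hrec : Real.Gamma ((1 + a) + 1) = (1 + a) * Real.Gamma (1 + a) :=
        Real.Gamma_add_one (by linarith)
      have h2a : (2:ℝ) + a = (1 + a) + 1 := by ring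
      rw [h2a, hrec] at hG2
      have hstep : a ^ a * Real.exp (-a) * (1 + a) ≤ 1 := by
        have h1 : a ^ a = Real.exp (Real.log a * a) := Real.rpow_def_of_pos h a
        have h2 : (1:ℝ) + a ≤ Real.exp a := by linarith [Real.add_one_le_exp a]
        have h3 : Real.log a * a ≤ 0 :=
          mul_nonpos_of_nonpos_of_nonneg (Real.log_nonpos ha0 (by linarith)) (le_of_lt h)
        calc a ^ a * Real.exp (-a) * (1 + a)
            ≤ a ^ a * Real.exp (-a) * Real.exp a := by
              apply mul_le_mul_of_nonneg_left h2
              positivity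
          _ = Real.exp (Real.log a * a) := by
              rw [h1, ← Real.exp_add, ← Real.exp_add]; congr 1; ring
          _ ≤ Real.exp 0 := Real.exp_le_exp.mpr h3
          _ = 1 := Real.exp_zero
      nlinarith [Real.Gamma_pos_of_pos (show (0:ℝ) < 1 + a by linarith),
        mul_pos (Real.exp_pos (-a)) (show (0:ℝ) < 1 + a by linarith),
        Real.rpow_nonneg ha0 a]
  | succ n ih =>
    intro a ha0 ha1
    push_cast at ha1
    by_cases hle : a ≤ n + 1
    · exact ih a ha0 hle
    · push_neg at hle
      have hn0 : (0:ℝ) ≤ (n:ℝ) := Nat.cast_nonneg n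
      have hb0 : (0:ℝ) ≤ a - 1 := by linarith
      have hb1 : a - 1 ≤ (n:ℝ) + 1 := by linarith
      have hbpos : 0 < a - 1 := by linarith
      have ha1' : (1:ℝ) < a := by linarith
      have hIH := ih (a - 1) hb0 hb1
      have hrec : Real.Gamma (1 + a) = a * Real.Gamma (1 + (a - 1)) := by
        have h := Real.Gamma_add_one (show a ≠ 0 by linarith)
        rw [show (1:ℝ) + a = a + 1 by ring, h, show (1:ℝ) + (a - 1) = a by ring]
      have hkey : a ^ a * Real.exp (-a) ≤ a * ((a - 1) ^ (a - 1) * Real.exp (-(a - 1))) := by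
        have hd : Real.log a - Real.log (a - 1) ≤ 1 / (a - 1) := by
          have h := Real.log_le_sub_one_of_pos (show (0:ℝ) < a / (a - 1) by positivity)
          rw [Real.log_div (by linarith) (by linarith)] at h
          have heq : a / (a - 1) - 1 = 1 / (a - 1) := by field_simp; ring
          linarith [heq ▸ h]
        have hlog : Real.log a * (a - 1) ≤ Real.log (a - 1) * (a - 1) + 1 := by
          have h := mul_le_mul_of_nonneg_left hd hb0
          have heq : (a - 1) * (1 / (a - 1)) = 1 := by field_simp
          nlinarith
        have hpow : a ^ (a - 1) ≤ (a - 1) ^ (a - 1) * Real.exp 1 := by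
          rw [Real.rpow_def_of_pos (by linarith : (0:ℝ) < a),
            Real.rpow_def_of_pos hbpos, ← Real.exp_add]
          exact Real.exp_le_exp.mpr hlog
        have haa : a ^ a = a ^ (a - 1) * a := by
          rw [← Real.rpow_add_one (by linarith : a ≠ 0)]
          norm_num
        have hexp : Real.exp 1 * Real.exp (-a) = Real.exp (-(a - 1)) := by
          rw [← Real.exp_add]; congr 1; ring
        calc a ^ a * Real.exp (-a) = a * (a ^ (a - 1) * Real.exp (-a)) := by rw [haa]; ring
          _ ≤ a * ((a - 1) ^ (a - 1) * Real.exp 1 * Real.exp (-a)) := by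
              apply mul_le_mul_of_nonneg_left _ (by linarith : (0:ℝ) ≤ a)
              apply mul_le_mul_of_nonneg_right hpow (le_of_lt (Real.exp_pos _))
          _ = a * ((a - 1) ^ (a - 1) * Real.exp (-(a - 1))) := by
              rw [mul_assoc ((a-1) ^ (a-1)), hexp]
      calc a ^ a * Real.exp (-a) ≤ a * ((a - 1) ^ (a - 1) * Real.exp (-(a - 1))) := hkey
        _ ≤ a * Real.Gamma (1 + (a - 1)) :=
            mul_le_mul_of_nonneg_left hIH (by linarith : (0:ℝ) ≤ a)
        _ = Real.Gamma (1 + a) := hrec.symm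

lemma gamma_lb {a : ℝ} (ha : 0 ≤ a) : a ^ a * Real.exp (-a) ≤ Real.Gamma (1 + a) := by
  obtain ⟨n, hn⟩ := exists_nat_ge a
  exact gamma_lb_aux n a ha (by push_cast; linarith)

lemma gamma_ub_aux : ∀ (n : ℕ) (x : ℝ), 1 ≤ x → x ≤ n + 2 →
    Real.Gamma x ≤ x ^ (x + 1/2) * Real.exp (1 - x) := by
  intro n
  induction n with
  | zero =>
    intro x hx1 hx2
    norm_num at hx2
    have hxpos : (0:ℝ) < x := by linarith
    have h1 : Real.Gamma x ≤ 1 := gamma_le_one_aux hx1 hx2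
    have hlog : 1 - 1/x ≤ Real.log x := by
      have h := Real.log_le_sub_one_of_pos (show (0:ℝ) < 1/x by positivity)
      rw [Real.log_div one_ne_zero (by linarith), Real.log_one] at h
      linarith
    have hE : 0 ≤ Real.log x * (x + 1/2) + (1 - x) := by
      have hxx : (0:ℝ) ≤ x + 1/2 := by linarith
      have h := mul_le_mul_of_nonneg_left hlog hxx
      have hid : (x + 1/2) * (1 - 1/x) + (1 - x) = 1/2 - 1/(2*x) := by field_simp; ring
      have hge : (0:ℝ) ≤ 1/2 - 1/(2*x) := by
        have : 1/(2*x) ≤ 1/2 := by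
          apply div_le_div_of_nonneg_left (by norm_num) (by norm_num) (by linarith)
        linarith
      nlinarith
    calc Real.Gamma x ≤ 1 := h1
      _ = Real.exp 0 := Real.exp_zero.symm
      _ ≤ Real.exp (Real.log x * (x + 1/2) + (1 - x)) := Real.exp_le_exp.mpr hE
      _ = x ^ (x + 1/2) * Real.exp (1 - x) := by
          rw [Real.exp_add, Real.rpow_def_of_pos hxpos]
  | succ n ih =>
    intro x hx1 hx2
    push_cast at hx2
    by_cases hle : x ≤ n + 2
    · exact ih x hx1 hle
    · push_neg at hle
      have hn0 : (0:ℝ) ≤ (n:ℝ) := Nat.cast_nonneg n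
      have hy1 : (1:ℝ) ≤ x - 1 := by linarith
      have hy2 : x - 1 ≤ (n:ℝ) + 2 := by linarith
      have hypos : (0:ℝ) < x - 1 := by linarith
      have hxpos : (0:ℝ) < x := by linarith
      have hIH := ih (x - 1) hy1 hy2
      have hrec : Real.Gamma x = (x - 1) * Real.Gamma (x - 1) := by
        have h : Real.Gamma ((x-1) + 1) = (x-1) * Real.Gamma (x-1) :=
          Real.Gamma_add_one (by linarith)
        rw [show (x-1) + 1 = x by ring] at h
        exact h
      have hlogd : 1/x ≤ Real.log x - Real.log (x - 1) := by
        have h := Real.log_le_sub_one_of_pos (show (0:ℝ) < (x-1)/x by positivity)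
        rw [Real.log_div (by linarith) (by linarith)] at h
        have heq : (x - 1)/x - 1 = -(1/x) := by field_simp; ring
        linarith [heq ▸ h]
      have hkey : 1 + Real.log (x - 1) * (x + 1/2) ≤ Real.log x * (x + 1/2) := by
        have hxx : (0:ℝ) ≤ x + 1/2 := by linarith
        have h := mul_le_mul_of_nonneg_left hlogd hxx
        have h1 : (1:ℝ) ≤ (x + 1/2) * (1/x) := by
          rw [mul_one_div, le_div_iff₀ hxpos]; linarith
        nlinarith
      calc Real.Gamma x = (x - 1) * Real.Gamma (x - 1) := hrec
        _ ≤ (x - 1) * ((x-1) ^ ((x-1) + 1/2) * Real.exp (1 - (x-1))) :=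
            mul_le_mul_of_nonneg_left hIH (by linarith)
        _ = Real.exp (Real.log (x-1) + (Real.log (x-1) * ((x-1) + 1/2) + (1 - (x-1)))) := by
            rw [Real.rpow_def_of_pos hypos]
            nth_rewrite 1 [← Real.exp_log hypos]
            rw [← Real.exp_add, ← Real.exp_add]
        _ ≤ Real.exp (Real.log x * (x + 1/2) + (1 - x)) := by
            apply Real.exp_le_exp.mpr; nlinarith
        _ = x ^ (x + 1/2) * Real.exp (1 - x) := by
            rw [Real.exp_add, Real.rpow_def_of_pos hxpos]

lemma gamma_ub {x : ℝ} (hx : 1 ≤ x) : Real.Gamma x ≤ x ^ (x + 1/2) * Real.exp (1 - x) := by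
  obtain ⟨n, hn⟩ := exists_nat_ge x
  exact gamma_ub_aux n x hx (by push_cast; linarith)

/- ### The Dirichlet-part bound -/

lemma dirichlet_bound {S : ℕ} (hS : 1 ≤ S) {c : ℝ} (hc : 0 < c) {w ω : Fin S → ℝ}
    (hw0 : ∀ s, 0 ≤ w s) (hw1 : ∑ s, w s = 1) (hω0 : ∀ s, 0 ≤ ω s) (hω1 : ∑ s, ω s = 1) :
    (Real.Gamma (c + S) / ∏ s, Real.Gamma (1 + c * w s)) * ∏ s, ω s ^ (c * w s)
      ≤ (c + S) ^ (c + S + 1/2) * c ^ (-c) := by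
  have hΓpos : 0 < ∏ s, Real.Gamma (1 + c * w s) :=
    Finset.prod_pos fun s _ => Real.Gamma_pos_of_pos (by nlinarith [hw0 s, mul_nonneg hc.le (hw0 s)])
  have stepA : ∏ s, ω s ^ (c * w s) ≤ ∏ s, w s ^ (c * w s) := by
    have claim1 : ∏ s, ω s ^ (w s) ≤ ∏ s, w s ^ (w s) := by
      set z : Fin S → ℝ := fun s => if w s = 0 then 0 else ω s / w s with hz
      have hz0 : ∀ s, 0 ≤ z s := by
        intro s; simp only [hz]
        split
        · exact le_refl 0
        · exact div_nonneg (hω0 s) (hw0 s)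
      have hAMGM := Real.geom_mean_le_arith_mean_weighted Finset.univ w z
        (fun s _ => hw0 s) hw1 (fun s _ => hz0 s)
      have hsum : ∑ s, w s * z s ≤ 1 := by
        rw [← hω1]
        apply Finset.sum_le_sum
        intro s _
        simp only [hz]
        split_ifs with h
        · simpa using hω0 s
        · rw [mul_div_cancel₀ _ h]
      have hfact : ∀ s, ω s ^ (w s) = w s ^ (w s) * z s ^ (w s) := by
        intro s
        simp only [hz]
        split_ifs with h
        · simp [h]
        · rw [← Real.mul_rpow (hw0 s) (div_nonneg (hω0 s) (hw0 s)),
            mul_div_cancel₀ _ h]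
      calc ∏ s, ω s ^ (w s) = (∏ s, w s ^ (w s)) * ∏ s, z s ^ (w s) := by
            rw [← Finset.prod_mul_distrib]; exact Finset.prod_congr rfl fun s _ => hfact s
        _ ≤ (∏ s, w s ^ (w s)) * 1 := by
            apply mul_le_mul_of_nonneg_left (hAMGM.trans hsum)
            exact Finset.prod_nonneg fun s _ => Real.rpow_nonneg (hw0 s) _
        _ = ∏ s, w s ^ (w s) := mul_one _
    have hcngω : ∀ s : Fin S, ω s ^ (c * w s) = (ω s ^ (w s)) ^ c := by
      intro s; rw [mul_comm, Real.rpow_mul (hω0 s)]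
    have hcngw : ∀ s : Fin S, w s ^ (c * w s) = (w s ^ (w s)) ^ c := by
      intro s; rw [mul_comm, Real.rpow_mul (hw0 s)]
    calc ∏ s, ω s ^ (c * w s) = (∏ s, ω s ^ (w s)) ^ c := by
          rw [← Real.finset_prod_rpow _ _ (fun s _ => Real.rpow_nonneg (hω0 s) _) c]
          exact Finset.prod_congr rfl fun s _ => hcngω s
      _ ≤ (∏ s, w s ^ (w s)) ^ c := by
          apply Real.rpow_le_rpow
            (Finset.prod_nonneg fun s _ => Real.rpow_nonneg (hω0 s) _) claim1 hc.le
      _ = ∏ s, w s ^ (c * w s) := by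
          rw [← Real.finset_prod_rpow _ _ (fun s _ => Real.rpow_nonneg (hw0 s) _) c]
          exact (Finset.prod_congr rfl fun s _ => hcngw s).symm
  have stepB : ∏ s, w s ^ (c * w s)
      ≤ Real.exp c * c ^ (-c) * ∏ s, Real.Gamma (1 + c * w s) := by
    have hterm : ∀ s : Fin S, w s ^ (c * w s)
        ≤ Real.exp (c * w s) * c ^ (-(c * w s)) * Real.Gamma (1 + c * w s) := by
      intro s
      by_cases h : w s = 0
      · simp [h, Real.Gamma_one]
      · have hwpos : 0 < w s := lt_of_le_of_ne (hw0 s) (Ne.symm h)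
        set a := c * w s with ha
        have hapos : 0 < a := mul_pos hc hwpos
        have h1 : a ^ a ≤ Real.exp a * Real.Gamma (1 + a) := by
          have hgl := gamma_lb hapos.le
          have he : a ^ a = a ^ a * Real.exp (-a) * Real.exp a := by
            rw [mul_assoc, ← Real.exp_add]; simp
          rw [he]
          calc a ^ a * Real.exp (-a) * Real.exp a
              ≤ Real.Gamma (1 + a) * Real.exp a :=
                mul_le_mul_of_nonneg_right hgl (Real.exp_pos a).le
            _ = Real.exp a * Real.Gamma (1 + a) := mul_comm _ _
        have hws : w s = a / c := by rw [ha, mul_comm, mul_div_assoc, div_self hc.ne', mul_one]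
        calc w s ^ a = a ^ a / c ^ a := by rw [hws, Real.div_rpow hapos.le hc.le]
          _ ≤ (Real.exp a * Real.Gamma (1 + a)) / c ^ a := by
              have hca : (0:ℝ) < c ^ a := Real.rpow_pos_of_pos hc a
              gcongr
          _ = Real.exp a * c ^ (-a) * Real.Gamma (1 + a) := by
              rw [Real.rpow_neg hc.le]; ring
    calc ∏ s, w s ^ (c * w s)
        ≤ ∏ s, Real.exp (c * w s) * c ^ (-(c * w s)) * Real.Gamma (1 + c * w s) := by
          apply Finset.prod_le_prod (fun s _ => Real.rpow_nonneg (hw0 s) _)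
            (fun s _ => hterm s)
      _ = (∏ s, Real.exp (c * w s)) * (∏ s, c ^ (-(c * w s)))
            * ∏ s, Real.Gamma (1 + c * w s) := by
          rw [← Finset.prod_mul_distrib, ← Finset.prod_mul_distrib]
      _ = Real.exp c * c ^ (-c) * ∏ s, Real.Gamma (1 + c * w s) := by
          congr 1
          congr 1
          · rw [← Real.exp_sum, ← Finset.mul_sum, hw1, mul_one]
          · have hthis : ∀ s : Fin S, c ^ (-(c * w s)) = Real.exp (Real.log c * (-(c * w s))) :=
              fun s => Real.rpow_def_of_pos hc _
            have hsum : (∑ i : Fin S, -(c * w i)) = -c := by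
              rw [Finset.sum_neg_distrib, ← Finset.mul_sum, hw1, mul_one]
            rw [Finset.prod_congr rfl fun s _ => hthis s, ← Real.exp_sum, ← Finset.mul_sum,
              hsum, Real.rpow_def_of_pos hc]
  have hcS1 : (1:ℝ) ≤ c + S := by
    have : (1:ℝ) ≤ (S:ℝ) := by exact_mod_cast hS
    linarith
  have hmain : (Real.Gamma (c + S) / ∏ s, Real.Gamma (1 + c * w s)) * ∏ s, ω s ^ (c * w s)
      ≤ Real.Gamma (c + S) * Real.exp c * c ^ (-c) := by
    have hdiv : 0 ≤ Real.Gamma (c + S) / ∏ s, Real.Gamma (1 + c * w s) :=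
      div_nonneg (Real.Gamma_pos_of_pos (by linarith)).le hΓpos.le
    calc (Real.Gamma (c + S) / ∏ s, Real.Gamma (1 + c * w s)) * ∏ s, ω s ^ (c * w s)
        ≤ (Real.Gamma (c + S) / ∏ s, Real.Gamma (1 + c * w s))
            * (Real.exp c * c ^ (-c) * ∏ s, Real.Gamma (1 + c * w s)) :=
          mul_le_mul_of_nonneg_left (stepA.trans stepB) hdiv
      _ = Real.Gamma (c + S) * Real.exp c * c ^ (-c) := by
          field_simp
  refine hmain.trans ?_
  have hub := gamma_ub hcS1
  have hS1 : (1:ℝ) ≤ (S:ℝ) := by exact_mod_cast hS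
  have hexp : Real.exp (1 - (c + S)) * Real.exp c ≤ 1 := by
    rw [← Real.exp_add]
    calc Real.exp (1 - (c + S) + c) ≤ Real.exp 0 := Real.exp_le_exp.mpr (by linarith)
      _ = 1 := Real.exp_zero
  have hpow_nonneg : (0:ℝ) ≤ (c + S) ^ (c + S + 1/2) := Real.rpow_nonneg (by linarith) _
  calc Real.Gamma (c + S) * Real.exp c * c ^ (-c)
      ≤ ((c + S) ^ (c + S + 1/2) * Real.exp (1 - (c + S))) * Real.exp c * c ^ (-c) := by
        apply mul_le_mul_of_nonneg_right _ (Real.rpow_nonneg hc.le _)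
        exact mul_le_mul_of_nonneg_right hub (Real.exp_pos c).le
    _ = (c + S) ^ (c + S + 1/2) * (Real.exp (1 - (c + S)) * Real.exp c) * c ^ (-c) := by ring
    _ ≤ (c + S) ^ (c + S + 1/2) * 1 * c ^ (-c) := by
        apply mul_le_mul_of_nonneg_right _ (Real.rpow_nonneg hc.le _)
        exact mul_le_mul_of_nonneg_left hexp hpow_nonneg
    _ = (c + S) ^ (c + S + 1/2) * c ^ (-c) := by ring

/- ### Measure-theoretic lemmas -/

lemma lintegral_pi_prod {S : ℕ} (f : ℝ → ℝ≥0∞) (hf : Measurable f) :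
    ∫⁻ x : Fin S → ℝ, (∏ s, f (x s)) ∂(Measure.pi fun _ => (volume : Measure ℝ))
      = (∫⁻ y, f y) ^ S := by
  induction S with
  | zero => simp [lintegral_const, Measure.pi_univ]
  | succ n ih =>
    have hmp := measurePreserving_piFinSuccAbove (fun _ : Fin (n+1) => (volume : Measure ℝ)) 0
    calc ∫⁻ x : Fin (n+1) → ℝ, (∏ s, f (x s)) ∂(Measure.pi fun _ => (volume : Measure ℝ))
        = ∫⁻ x : Fin (n+1) → ℝ, (f (x 0) * ∏ j : Fin n, f (x (Fin.succAbove 0 j)))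
            ∂(Measure.pi fun _ => (volume : Measure ℝ)) := by
          refine lintegral_congr fun x => ?_
          rw [Fin.prod_univ_succAbove (fun s => f (x s)) 0]
      _ = ∫⁻ z : ℝ × (Fin n → ℝ), (f z.1 * ∏ j, f (z.2 j))
            ∂((volume : Measure ℝ).prod (Measure.pi fun _ => (volume : Measure ℝ))) := by
          rw [hmp.lintegral_map_equiv (fun z : ℝ × (Fin n → ℝ) => f z.1 * ∏ j, f (z.2 j))
            (MeasurableEquiv.piFinSuccAbove (fun _ => ℝ) 0)]
          rfl
      _ = (∫⁻ y, f y) * ∫⁻ x : Fin n → ℝ, (∏ j, f (x j))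
            ∂(Measure.pi fun _ => (volume : Measure ℝ)) := by
          exact lintegral_prod_mul hf.aemeasurable
            (Finset.measurable_prod _ fun j _ => hf.comp (measurable_pi_apply j)).aemeasurable
      _ = (∫⁻ y, f y) ^ (n + 1) := by rw [ih]; ring

lemma pareto_lintegral {δ t T : ℝ} (hδ : 0 < δ) (ht : 0 < t) (hT : 0 ≤ T) :
    ∫⁻ x, ENNReal.ofReal (if t ≤ x then δ * T ^ δ * x ^ (-(δ+1)) else 0)
      = ENNReal.ofReal (T ^ δ * t ^ (-δ)) := by
  have h1 : (fun x => ENNReal.ofReal (if t ≤ x then δ * T ^ δ * x ^ (-(δ+1)) else 0))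
      = (Ici t).indicator (fun x => ENNReal.ofReal (δ * T ^ δ * x ^ (-(δ+1)))) := by
    ext x
    rw [Set.indicator_apply]
    simp only [mem_Ici]
    split_ifs <;> simp
  rw [h1, lintegral_indicator measurableSet_Ici,
    ← MeasureTheory.restrict_Ioi_eq_restrict_Ici]
  have hInt : IntegrableOn (fun x : ℝ => δ * T ^ δ * x ^ (-(δ+1))) (Ioi t) :=
    (integrableOn_Ioi_rpow_of_lt (by linarith) ht).const_mul (δ * T ^ δ)
  have hnn : 0 ≤ᵐ[volume.restrict (Ioi t)] fun x : ℝ => δ * T ^ δ * x ^ (-(δ+1)) := by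
    refine (ae_restrict_mem measurableSet_Ioi).mono fun x hx => ?_
    have hx0 : (0:ℝ) ≤ x := le_of_lt (lt_trans ht hx)
    positivity
  rw [← ofReal_integral_eq_lintegral_ofReal hInt hnn]
  congr 1
  rw [MeasureTheory.integral_const_mul, integral_Ioi_rpow_of_lt (by linarith) ht]
  have h2 : -(δ+1) + 1 = -δ := by ring
  rw [h2]
  field_simp

lemma simplexMeasure_univ_le (S : ℕ) : simplexMeasure S Set.univ ≤ 1 := by
  cases S with
  | zero => simp [simplexMeasure]
  | succ m =>
    have hF : Measurable (fun y : Fin m → ℝ => (Fin.snoc y (1 - ∑ i, y i) : Fin (m+1) → ℝ)) := by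
      apply measurable_pi_iff.mpr
      intro j
      refine Fin.lastCases ?_ ?_ j
      · simp only [Fin.snoc_last]
        exact measurable_const.sub (Finset.measurable_sum _ fun i _ => measurable_pi_apply i)
      · intro i
        simp only [Fin.snoc_castSucc]
        exact measurable_pi_apply i
    rw [simplexMeasure, Measure.map_apply hF MeasurableSet.univ, Set.preimage_univ,
      Measure.restrict_apply_univ]
    calc volume {y : Fin m → ℝ | (∀ i, 0 ≤ y i) ∧ ∑ i, y i ≤ 1}
        ≤ volume (Set.pi Set.univ fun _ : Fin m => Icc (0:ℝ) 1) := by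
          apply measure_mono
          rintro y ⟨h0, h1⟩
          intro i _
          exact ⟨h0 i, le_trans (Finset.single_le_sum (fun j _ => h0 j) (Finset.mem_univ i)) h1⟩
      _ = 1 := by
          rw [volume_pi_pi]
          simp [Real.volume_Icc]

lemma simplexMeasure_finite (S : ℕ) : IsFiniteMeasure (simplexMeasure S) :=
  ⟨lt_of_le_of_lt (simplexMeasure_univ_le S) ENNReal.one_lt_top⟩

/-- **Data-free bound on the empirical prior density.**  For any center `θ̂ ∈ Θ_n` (so the
bound is data-free) and any `θ = (ω, μ) ∈ Θ_n`,
`π_n(θ) ≤ (c + S)^{c+S+1/2} c^{-c} Π_s δ T^δ μ_s^{-(δ+1)} 1(μ_s ≥ t)`; consequently,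
`∫_{Θ_n} sup_{data} π_n(θ) dθ ≤ (c + S)^{c+S+1/2} c^{-c} (T/t)^{δS}`. -/
theorem empirical_prior_density_global_bound
    (S : ℕ) (hS : 1 ≤ S) (c δ t T : ℝ)
    (hc : 0 < c) (hδ : 0 < δ) (ht : 0 < t) (htT : t < T) :
    (∀ θhat ∈ sieve S t T, ∀ θ ∈ sieve S t T,
      empPriorDens S c δ θhat θ ≤
        (c + S) ^ (c + S + 1 / 2) * c ^ (-c) *
          ∏ s, (if t ≤ θ.2 s then δ * T ^ δ * θ.2 s ^ (-(δ + 1)) else 0)) ∧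
    (∫⁻ θ in sieve S t T,
        (⨆ θhat ∈ sieve S t T, ENNReal.ofReal (empPriorDens S c δ θhat θ))
        ∂((simplexMeasure S).prod (Measure.pi fun _ : Fin S => (volume : Measure ℝ))) ≤
      ENNReal.ofReal ((c + S) ^ (c + S + 1 / 2) * c ^ (-c) * (T / t) ^ (δ * S))) := by
  have hT0 : (0:ℝ) < T := lt_trans ht htT
  have hKnn : (0:ℝ) ≤ (c + S) ^ (c + S + 1/2) * c ^ (-c) := by
    have h1 : (0:ℝ) ≤ c + S := by positivity
    exact mul_nonneg (Real.rpow_nonneg h1 _) (Real.rpow_nonneg hc.le _)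
  -- Part 1
  have hpart1 : ∀ θhat ∈ sieve S t T, ∀ θ ∈ sieve S t T,
      empPriorDens S c δ θhat θ ≤
        (c + S) ^ (c + S + 1 / 2) * c ^ (-c) *
          ∏ s, (if t ≤ θ.2 s then δ * T ^ δ * θ.2 s ^ (-(δ + 1)) else 0) := by
    rintro ⟨what, mhat⟩ ⟨⟨hw0, hw1⟩, hmhat⟩ ⟨ω, μ⟩ ⟨⟨hω0, hω1⟩, hμ⟩
    have hdir := dirichlet_bound hS hc hw0 hw1 hω0 hω1
    have hparnn : ∀ s, 0 ≤ paretoDens (mhat s) δ (μ s) := by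
      intro s
      unfold paretoDens
      split_ifs
      · have h1 : (0:ℝ) ≤ mhat s := le_trans ht.le (hmhat s).1
        have h2 : (0:ℝ) ≤ μ s := le_trans ht.le (hμ s).1
        positivity
      · exact le_refl 0
    have hpar : ∀ s, paretoDens (mhat s) δ (μ s)
        ≤ (if t ≤ μ s then δ * T ^ δ * (μ s) ^ (-(δ + 1)) else 0) := by
      intro s
      rw [if_pos (hμ s).1]
      unfold paretoDens
      have h2 : (0:ℝ) ≤ μ s := le_trans ht.le (hμ s).1
      split_ifs with h
      · have h1 : (0:ℝ) ≤ mhat s := le_trans ht.le (hmhat s).1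
        have h3 : mhat s ^ δ ≤ T ^ δ := Real.rpow_le_rpow h1 (hmhat s).2 hδ.le
        have h4 : (0:ℝ) ≤ (μ s) ^ (-(δ + 1)) := Real.rpow_nonneg h2 _
        have h5 : δ * mhat s ^ δ ≤ δ * T ^ δ := mul_le_mul_of_nonneg_left h3 hδ.le
        exact mul_le_mul_of_nonneg_right h5 h4
      · positivity
    unfold empPriorDens
    simp only
    apply mul_le_mul hdir
      (Finset.prod_le_prod (fun s _ => hparnn s) fun s _ => hpar s)
      (Finset.prod_nonneg fun s _ => hparnn s) hKnn
  refine ⟨hpart1, ?_⟩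
  -- Part 2
  haveI : IsFiniteMeasure (simplexMeasure S) := simplexMeasure_finite S
  set f : ℝ → ℝ≥0∞ :=
    fun x => ENNReal.ofReal (if t ≤ x then δ * T ^ δ * x ^ (-(δ + 1)) else 0) with hfdef
  have hfmeas : Measurable f := by
    apply ENNReal.measurable_ofReal.comp
    exact Measurable.ite (measurableSet_le measurable_const measurable_id)
      (by measurability) measurable_const
  have hA : MeasurableSet (simplexSet S) := by
    have heq : simplexSet S
        = (⋂ s, {ω : Fin S → ℝ | 0 ≤ ω s}) ∩ {ω : Fin S → ℝ | (∑ s, ω s) = 1} := by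
      ext ω; simp [simplexSet, Set.mem_iInter]
    rw [heq]
    refine (MeasurableSet.iInter fun s => ?_).inter ?_
    · exact measurableSet_le measurable_const (measurable_pi_apply s)
    · exact measurableSet_eq_fun
        (Finset.measurable_sum _ fun s _ => measurable_pi_apply s) measurable_const
  have hB : MeasurableSet {μ : Fin S → ℝ | ∀ s, μ s ∈ Icc t T} := by
    have heq : {μ : Fin S → ℝ | ∀ s, μ s ∈ Icc t T}
        = ⋂ s, (fun μ : Fin S → ℝ => μ s) ⁻¹' (Icc t T) := by
      ext μ; simp [Set.mem_iInter]
    rw [heq]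
    exact MeasurableSet.iInter fun s => (measurable_pi_apply s) measurableSet_Icc
  have hsieve_eq : sieve S t T = simplexSet S ×ˢ {μ : Fin S → ℝ | ∀ s, μ s ∈ Icc t T} := rfl
  have hsieve_meas : MeasurableSet (sieve S t T) := by rw [hsieve_eq]; exact hA.prod hB
  have hpt : ∀ θ ∈ sieve S t T,
      (⨆ θhat ∈ sieve S t T, ENNReal.ofReal (empPriorDens S c δ θhat θ))
      ≤ ENNReal.ofReal ((c + S) ^ (c + S + 1/2) * c ^ (-c)) * ∏ s, f (θ.2 s) := by
    intro θ hθ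
    refine iSup₂_le fun θhat hθhat => ?_
    refine le_trans (ENNReal.ofReal_le_ofReal (hpart1 θhat hθhat θ hθ)) ?_
    rw [ENNReal.ofReal_mul hKnn, ENNReal.ofReal_prod_of_nonneg]
    intro s _
    have h2 : (0:ℝ) ≤ θ.2 s := by
      rcases hθ with ⟨_, hμ⟩
      exact le_trans ht.le (hμ s).1
    split_ifs
    · positivity
    · exact le_refl 0
  calc ∫⁻ θ in sieve S t T,
        (⨆ θhat ∈ sieve S t T, ENNReal.ofReal (empPriorDens S c δ θhat θ))
        ∂((simplexMeasure S).prod (Measure.pi fun _ : Fin S => (volume : Measure ℝ)))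
      ≤ ∫⁻ θ in sieve S t T,
          (ENNReal.ofReal ((c + S) ^ (c + S + 1/2) * c ^ (-c)) * ∏ s, f (θ.2 s))
          ∂((simplexMeasure S).prod (Measure.pi fun _ : Fin S => (volume : Measure ℝ))) :=
        setLIntegral_mono' hsieve_meas hpt
    _ ≤ ∫⁻ θ in (simplexSet S) ×ˢ (Set.univ : Set (Fin S → ℝ)),
          (ENNReal.ofReal ((c + S) ^ (c + S + 1/2) * c ^ (-c)) * ∏ s, f (θ.2 s))
          ∂((simplexMeasure S).prod (Measure.pi fun _ : Fin S => (volume : Measure ℝ))) := by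
        apply lintegral_mono'
        · apply Measure.restrict_mono _ le_rfl
          rw [hsieve_eq]
          exact Set.prod_mono le_rfl (Set.subset_univ _)
        · exact le_rfl
    _ = ∫⁻ θ : (Fin S → ℝ) × (Fin S → ℝ),
          (ENNReal.ofReal ((c + S) ^ (c + S + 1/2) * c ^ (-c)) * ∏ s, f (θ.2 s))
          ∂(((simplexMeasure S).restrict (simplexSet S)).prod
            (Measure.pi fun _ : Fin S => (volume : Measure ℝ))) := by
        have hpr := Measure.prod_restrict (μ := simplexMeasure S)
          (ν := Measure.pi fun _ : Fin S => (volume : Measure ℝ)) (simplexSet S) Set.univ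
        rw [Measure.restrict_univ] at hpr
        rw [← hpr]
    _ = (∫⁻ _ : Fin S → ℝ, ENNReal.ofReal ((c + S) ^ (c + S + 1/2) * c ^ (-c))
            ∂((simplexMeasure S).restrict (simplexSet S)))
          * ∫⁻ x : Fin S → ℝ, (∏ s, f (x s))
            ∂(Measure.pi fun _ : Fin S => (volume : Measure ℝ)) :=
        lintegral_prod_mul aemeasurable_const
          (Finset.measurable_prod _ fun j _ => hfmeas.comp (measurable_pi_apply j)).aemeasurable
    _ = ENNReal.ofReal ((c + S) ^ (c + S + 1/2) * c ^ (-c))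
          * (simplexMeasure S) (simplexSet S) * (∫⁻ y, f y) ^ S := by
        rw [lintegral_const, Measure.restrict_apply_univ, lintegral_pi_prod f hfmeas]
    _ ≤ ENNReal.ofReal ((c + S) ^ (c + S + 1/2) * c ^ (-c))
          * 1 * (ENNReal.ofReal (T ^ δ * t ^ (-δ))) ^ S := by
        rw [hfdef, pareto_lintegral hδ ht hT0.le]
        gcongr
        exact le_trans (measure_mono (Set.subset_univ _)) (simplexMeasure_univ_le S)
    _ = ENNReal.ofReal ((c + S) ^ (c + S + 1 / 2) * c ^ (-c) * (T / t) ^ (δ * S)) := by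
        rw [mul_one, ← ENNReal.ofReal_pow (by positivity), ← ENNReal.ofReal_mul hKnn]
        congr 2
        rw [Real.rpow_mul (div_nonneg hT0.le ht.le), Real.rpow_natCast,
          Real.div_rpow hT0.le ht.le, Real.rpow_neg ht.le, div_eq_mul_inv]
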